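/- Let k be an algebraically closed field, and let φ₁ : G → GL(V₁) and φ₂ : G → GL(V₂) be irreducible 2-dimensional representations of a group G that are not isomorphic, and let μ : G → kˣ be a character with det(φ₁(g)) = det(φ₂(g)) = μ(g) for all g ∈ G. Consider the representation φ = φ₁ ⊕ φ₂ of G on V = V₁ ⊕ V₂. Then the space of alternating bilinear forms B on V satisfying B(φ(g)v, φ(g)w) = μ(g)·B(v,w) for all g, v, w has dimension exactly 2 over k. -/

import Mathlib

set_option synthInstance.maxHeartbeats 1000000
set_option maxHeartbeats 1000000

section Helpers

variable {k V : Type*} [Field k] [AddCommGroup V] [Module k V]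

private lemma alt_skew {B : V →ₗ[k] V →ₗ[k] k} (hB : ∀ v, B v v = 0) (v w : V) :
    B v w = - B w v := by
  have h := hB (v + w)
  simp only [map_add, LinearMap.add_apply, hB v, hB w, zero_add, add_zero] at h
  linear_combination h

private lemma alt_expand (b : Module.Basis (Fin 2) k V) {B : V →ₗ[k] V →ₗ[k] k}
    (hB : ∀ v, B v v = 0) (v w : V) :
    B v w = (b.repr v 0 * b.repr w 1 - b.repr v 1 * b.repr w 0) * B (b 0) (b 1) := by
  have hv := b.sum_repr v
  have hw := b.sum_repr w
  rw [Fin.sum_univ_two] at hv hw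
  conv_lhs => rw [← hv, ← hw]
  simp only [map_add, LinearMap.add_apply, map_smul, LinearMap.smul_apply,
    smul_eq_mul, hB, alt_skew hB (b 1) (b 0)]
  ring

private lemma alt_det [FiniteDimensional k V] (hdim : Module.finrank k V = 2)
    {B : V →ₗ[k] V →ₗ[k] k} (hB : ∀ v, B v v = 0) (f : V →ₗ[k] V) (v w : V) :
    B (f v) (f w) = LinearMap.det f * B v w := by
  set b : Module.Basis (Fin 2) k V := Module.finBasisOfFinrankEq k V hdim with hb
  have hdet : LinearMap.det f = b.repr (f (b 0)) 0 * b.repr (f (b 1)) 1 -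
      b.repr (f (b 1)) 0 * b.repr (f (b 0)) 1 := by
    rw [← LinearMap.det_toMatrix b f, Matrix.det_fin_two]
    simp [LinearMap.toMatrix_apply]
  have hB' : ∀ x, (B.compl₁₂ f f) x x = 0 := fun x => hB (f x)
  have h1 := alt_expand b hB' v w
  simp only [LinearMap.compl₁₂_apply] at h1
  have h2 := alt_expand b hB (f (b 0)) (f (b 1))
  have h3 := alt_expand b hB v w
  rw [h1, h2, h3, hdet]
  ring

/-- The standard symplectic form attached to a basis of a 2-dimensional space. -/
private noncomputable def omegaForm (b : Module.Basis (Fin 2) k V) : V →ₗ[k] V →ₗ[k] k :=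
  LinearMap.mk₂ k (fun v w => b.repr v 0 * b.repr w 1 - b.repr v 1 * b.repr w 0)
    (fun m₁ m₂ n => by simp only [map_add, Finsupp.add_apply]; ring)
    (fun c m n => by simp only [map_smul, Finsupp.smul_apply, smul_eq_mul]; ring)
    (fun m n₁ n₂ => by simp only [map_add, Finsupp.add_apply]; ring)
    (fun c m n => by simp only [map_smul, Finsupp.smul_apply, smul_eq_mul]; ring)

private lemma omegaForm_apply (b : Module.Basis (Fin 2) k V) (v w : V) :
    omegaForm b v w = b.repr v 0 * b.repr w 1 - b.repr v 1 * b.repr w 0 := rfl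

private lemma omegaForm_alt (b : Module.Basis (Fin 2) k V) : ∀ v, omegaForm b v v = 0 := by
  intro v; rw [omegaForm_apply]; ring

end Helpers

section Cross

variable {k G V₁ V₂ : Type*} [Field k]
    [AddCommGroup V₁] [Module k V₁] [FiniteDimensional k V₁]
    [AddCommGroup V₂] [Module k V₂] [Group G]

private lemma cross_zero (hdim₁ : Module.finrank k V₁ = 2)
    (φ₁ : G →* (V₁ ≃ₗ[k] V₁)) (φ₂ : G →* (V₂ ≃ₗ[k] V₂))
    (hirr₁ : ∀ W : Submodule k V₁, (∀ g : G, ∀ v ∈ W, φ₁ g v ∈ W) → W = ⊥ ∨ W = ⊤)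
    (hirr₂ : ∀ W : Submodule k V₂, (∀ g : G, ∀ v ∈ W, φ₂ g v ∈ W) → W = ⊥ ∨ W = ⊤)
    (hniso : ¬ ∃ e : V₁ ≃ₗ[k] V₂, ∀ (g : G) (v : V₁), e (φ₁ g v) = φ₂ g (e v))
    (μ : G →* kˣ)
    (hdet₁ : ∀ g : G, LinearMap.det (φ₁ g : V₁ →ₗ[k] V₁) = (μ g : k))
    (C : V₁ →ₗ[k] V₂ →ₗ[k] k)
    (hC : ∀ (g : G) (v : V₁) (w : V₂), C (φ₁ g v) (φ₂ g w) = (μ g : k) * C v w) :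
    C = 0 := by
  set b : Module.Basis (Fin 2) k V₁ := Module.finBasisOfFinrankEq k V₁ hdim₁ with hbdef
  set ω : V₁ →ₗ[k] V₁ →ₗ[k] k := omegaForm b with hω
  -- inverse of g acts as expected
  have h0 : ∀ (g : G) (y : V₁), φ₁ g (φ₁ g⁻¹ y) = y := by
    intro g y
    rw [map_inv]
    exact (φ₁ g).apply_symm_apply y
  -- equivariance of omega
  have hωeq : ∀ (g : G) (x y : V₁), ω (φ₁ g x) (φ₁ g y) = (μ g : k) * ω x y := by
    intro g x y
    have := alt_det hdim₁ (omegaForm_alt b) (φ₁ g : V₁ →ₗ[k] V₁) x y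
    simpa [hdet₁ g] using this
  -- the intertwiner
  set T : V₂ →ₗ[k] V₁ := (-(C (b 1))).smulRight (b 0) + (C (b 0)).smulRight (b 1) with hT
  have hTrepr0 : ∀ w, b.repr (T w) 0 = -(C (b 1) w) := by
    intro w
    simp [hT, LinearMap.smulRight_apply, map_add, map_smul, Module.Basis.repr_self,
      Finsupp.single_apply]
  have hTrepr1 : ∀ w, b.repr (T w) 1 = C (b 0) w := by
    intro w
    simp [hT, LinearMap.smulRight_apply, map_add, map_smul, Module.Basis.repr_self,
      Finsupp.single_apply]
  have hωT : ∀ (v : V₁) (w : V₂), ω v (T w) = C v w := by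
    intro v w
    have hv := b.sum_repr v
    rw [Fin.sum_univ_two] at hv
    rw [omegaForm_apply, hTrepr0, hTrepr1]
    conv_rhs => rw [← hv]
    simp only [map_add, map_smul, LinearMap.add_apply, LinearMap.smul_apply, smul_eq_mul]
    ring
  -- nondegeneracy
  have hnd : ∀ x y : V₁, (∀ v, ω v x = ω v y) → x = y := by
    intro x y h
    have h0' := h (b 0)
    have h1' := h (b 1)
    simp only [hω, omegaForm_apply, Module.Basis.repr_self, Finsupp.single_apply] at h0' h1'
    norm_num at h0' h1'
    have hx := b.sum_repr x
    have hy := b.sum_repr y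
    rw [Fin.sum_univ_two] at hx hy
    rw [← hx, ← hy, h0', h1']
  -- T intertwines
  have hTint : ∀ (g : G) (w : V₂), T (φ₂ g w) = φ₁ g (T w) := by
    intro g w
    refine hnd _ _ fun v => ?_
    have e1 : ω v (T (φ₂ g w)) = (μ g : k) * ω (φ₁ g⁻¹ v) (T w) := by
      rw [hωT]
      calc C v (φ₂ g w) = C (φ₁ g (φ₁ g⁻¹ v)) (φ₂ g w) := by rw [h0]
        _ = (μ g : k) * C (φ₁ g⁻¹ v) w := hC g _ w
        _ = (μ g : k) * ω (φ₁ g⁻¹ v) (T w) := by rw [hωT]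
    have e2 : ω v (φ₁ g (T w)) = (μ g : k) * ω (φ₁ g⁻¹ v) (T w) := by
      conv_lhs => rw [← h0 g v]
      rw [hωeq]
    rw [e1, e2]
  -- Schur
  have hT0 : T = 0 := by
    by_contra hne
    have hker : LinearMap.ker T = ⊥ := by
      rcases hirr₂ (LinearMap.ker T) (fun g v hv => by
        rw [LinearMap.mem_ker] at hv ⊢
        rw [hTint, hv, map_zero]) with h | h
      · exact h
      · exact absurd (LinearMap.ker_eq_top.mp h) hne
    have hrange : LinearMap.range T = ⊤ := by
      rcases hirr₁ (LinearMap.range T) (fun g v hv => by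
        obtain ⟨w, rfl⟩ := hv
        exact ⟨φ₂ g w, hTint g w⟩) with h | h
      · exact absurd (LinearMap.range_eq_bot.mp h) hne
      · exact h
    set e' : V₂ ≃ₗ[k] V₁ := LinearEquiv.ofBijective T
      ⟨LinearMap.ker_eq_bot.mp hker, LinearMap.range_eq_top.mp hrange⟩ with he'
    refine hniso ⟨e'.symm, fun g v => ?_⟩
    apply e'.injective
    rw [e'.apply_symm_apply]
    have : (e' : V₂ →ₗ[k] V₁) = T := rfl
    calc φ₁ g v = φ₁ g (e' (e'.symm v)) := by rw [e'.apply_symm_apply]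
      _ = φ₁ g (T (e'.symm v)) := rfl
      _ = T (φ₂ g (e'.symm v)) := (hTint g _).symm
      _ = e' (φ₂ g (e'.symm v)) := rfl
  ext v w
  have := hωT v w
  rw [hT0] at this
  simp only [LinearMap.zero_apply, map_zero] at this ⊢
  exact this.symm

end Cross

/-- For `φ = φ₁ ⊕ φ₂` with `φ₁ ≇ φ₂` irreducible `2`-dimensional and
`det φ₁ = det φ₂ = μ`, the space of `μ`-equivariant alternating bilinear forms
has dimension `2`. -/
theorem stmt_11 {k G V₁ V₂ : Type*} [Field k] [IsAlgClosed k]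
    [AddCommGroup V₁] [Module k V₁] [FiniteDimensional k V₁]
    [AddCommGroup V₂] [Module k V₂] [FiniteDimensional k V₂] [Group G]
    (hdim₁ : Module.finrank k V₁ = 2) (hdim₂ : Module.finrank k V₂ = 2)
    (φ₁ : G →* (V₁ ≃ₗ[k] V₁)) (φ₂ : G →* (V₂ ≃ₗ[k] V₂))
    (hirr₁ : ∀ W : Submodule k V₁, (∀ g : G, ∀ v ∈ W, φ₁ g v ∈ W) → W = ⊥ ∨ W = ⊤)
    (hirr₂ : ∀ W : Submodule k V₂, (∀ g : G, ∀ v ∈ W, φ₂ g v ∈ W) → W = ⊥ ∨ W = ⊤)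
    (hniso : ¬ ∃ e : V₁ ≃ₗ[k] V₂, ∀ (g : G) (v : V₁), e (φ₁ g v) = φ₂ g (e v))
    (μ : G →* kˣ)
    (hdet₁ : ∀ g : G, LinearMap.det (φ₁ g : V₁ →ₗ[k] V₁) = (μ g : k))
    (hdet₂ : ∀ g : G, LinearMap.det (φ₂ g : V₂ →ₗ[k] V₂) = (μ g : k)) :
    ∃ S : Submodule k (((V₁ × V₂) →ₗ[k] (V₁ × V₂) →ₗ[k] k)),
      (S : Set (((V₁ × V₂) →ₗ[k] (V₁ × V₂) →ₗ[k] k))) =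
        {B | (∀ v, B v v = 0) ∧
          ∀ (g : G) (v w : V₁ × V₂),
            B (φ₁ g v.1, φ₂ g v.2) (φ₁ g w.1, φ₂ g w.2) = (μ g : k) * B v w} ∧
      Module.finrank k S = 2 := by
  classical
  set b : Module.Basis (Fin 2) k V₁ := Module.finBasisOfFinrankEq k V₁ hdim₁ with hbdef
  set c : Module.Basis (Fin 2) k V₂ := Module.finBasisOfFinrankEq k V₂ hdim₂ with hcdef
  set S : Submodule k ((V₁ × V₂) →ₗ[k] (V₁ × V₂) →ₗ[k] k) :=
    { carrier := {B | (∀ v, B v v = 0) ∧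
        ∀ (g : G) (v w : V₁ × V₂),
          B (φ₁ g v.1, φ₂ g v.2) (φ₁ g w.1, φ₂ g w.2) = (μ g : k) * B v w}
      add_mem' := by
        rintro B B' ⟨hB1, hB2⟩ ⟨hB'1, hB'2⟩
        refine ⟨fun v => by simp [hB1 v, hB'1 v], fun g v w => by
          simp only [LinearMap.add_apply, hB2 g v w, hB'2 g v w]; ring⟩
      zero_mem' := by simp
      smul_mem' := by
        rintro a B ⟨hB1, hB2⟩
        refine ⟨fun v => by simp [hB1 v], fun g v w => by
          simp only [LinearMap.smul_apply, smul_eq_mul, hB2 g v w]; ring⟩ } with hSdef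
  refine ⟨S, rfl, ?_⟩
  -- the two generators
  set E₁ : (V₁ × V₂) →ₗ[k] (V₁ × V₂) →ₗ[k] k :=
    (omegaForm b).compl₁₂ (LinearMap.fst k V₁ V₂) (LinearMap.fst k V₁ V₂) with hE₁def
  set E₂ : (V₁ × V₂) →ₗ[k] (V₁ × V₂) →ₗ[k] k :=
    (omegaForm c).compl₁₂ (LinearMap.snd k V₁ V₂) (LinearMap.snd k V₁ V₂) with hE₂def
  have hE₁mem : E₁ ∈ S := by
    constructor
    · intro v
      simp only [hE₁def, LinearMap.compl₁₂_apply, LinearMap.fst_apply]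
      exact omegaForm_alt b v.1
    · intro g v w
      simp only [hE₁def, LinearMap.compl₁₂_apply, LinearMap.fst_apply]
      have := alt_det hdim₁ (omegaForm_alt b) (φ₁ g : V₁ →ₗ[k] V₁) v.1 w.1
      simpa [hdet₁ g] using this
  have hE₂mem : E₂ ∈ S := by
    constructor
    · intro v
      simp only [hE₂def, LinearMap.compl₁₂_apply, LinearMap.snd_apply]
      exact omegaForm_alt c v.2
    · intro g v w
      simp only [hE₂def, LinearMap.compl₁₂_apply, LinearMap.snd_apply]
      have := alt_det hdim₂ (omegaForm_alt c) (φ₂ g : V₂ →ₗ[k] V₂) v.2 w.2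
      simpa [hdet₂ g] using this
  -- the coordinate map
  set Φ : S →ₗ[k] k × k :=
    { toFun := fun B => (B.1 (b 0, 0) (b 1, 0), B.1 (0, c 0) (0, c 1))
      map_add' := by intro B B'; simp
      map_smul' := by intro a B; simp } with hΦdef
  have hΦinj : Function.Injective Φ := by
    letI : AddCommGroup S := by
      exact @Submodule.addCommGroup k ((V₁ × V₂) →ₗ[k] (V₁ × V₂) →ₗ[k] k) _ _ LinearMap.module S
    rw [injective_iff_map_eq_zero Φ]
    rintro ⟨B, hBalt, hBeq⟩ hB0
    simp only [hΦdef, LinearMap.coe_mk, AddHom.coe_mk, Prod.mk_eq_zero] at hB0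
    obtain ⟨hB01, hB02⟩ := hB0
    -- diagonal blocks
    have h11 : ∀ v w : V₁, B (v, 0) (w, 0) = 0 := by
      intro v w
      have halt : ∀ x, (B.compl₁₂ (LinearMap.inl k V₁ V₂) (LinearMap.inl k V₁ V₂)) x x = 0 := by
        intro x; simpa using hBalt ((x, 0) : V₁ × V₂)
      have := alt_expand b halt v w
      simp only [LinearMap.compl₁₂_apply, LinearMap.inl_apply] at this
      rw [this, hB01, mul_zero]
    have h22 : ∀ v w : V₂, B (0, v) (0, w) = 0 := by
      intro v w
      have halt : ∀ x, (B.compl₁₂ (LinearMap.inr k V₁ V₂) (LinearMap.inr k V₁ V₂)) x x = 0 := by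
        intro x; simpa using hBalt ((0, x) : V₁ × V₂)
      have := alt_expand c halt v w
      simp only [LinearMap.compl₁₂_apply, LinearMap.inr_apply] at this
      rw [this, hB02, mul_zero]
    -- cross block
    have h12 : ∀ (v : V₁) (w : V₂), B (v, 0) (0, w) = 0 := by
      have hC : B.compl₁₂ (LinearMap.inl k V₁ V₂) (LinearMap.inr k V₁ V₂) = 0 := by
        apply cross_zero hdim₁ φ₁ φ₂ hirr₁ hirr₂ hniso μ hdet₁
        intro g v w
        simp only [LinearMap.compl₁₂_apply, LinearMap.inl_apply, LinearMap.inr_apply]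
        have := hBeq g (v, (0 : V₂)) ((0 : V₁), w)
        simpa using this
      intro v w
      have h := LinearMap.ext_iff.mp hC v
      have h' := LinearMap.ext_iff.mp h w
      simpa using h'
    have h21 : ∀ (v : V₁) (w : V₂), B (0, w) (v, 0) = 0 := by
      intro v w
      rw [alt_skew hBalt, h12, neg_zero]
    -- conclude
    apply Subtype.ext
    refine LinearMap.ext fun x => LinearMap.ext fun y => ?_
    have hx : (x : V₁ × V₂) = (x.1, 0) + (0, x.2) := by simp
    have hy : (y : V₁ × V₂) = (y.1, 0) + (0, y.2) := by simp
    rw [hx, hy]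
    simp only [map_add, LinearMap.add_apply, h11, h22, h12, h21,
      LinearMap.zero_apply, add_zero, zero_add]
    simp
  have hΦsurj : Function.Surjective Φ := by
    rintro ⟨x, y⟩
    refine ⟨x • (⟨E₁, hE₁mem⟩ : S) + y • ⟨E₂, hE₂mem⟩, ?_⟩
    have hb01 : omegaForm b (b 0) (b 1) = 1 := by
      rw [omegaForm_apply]; simp [Module.Basis.repr_self, Finsupp.single_apply]
    have hc01 : omegaForm c (c 0) (c 1) = 1 := by
      rw [omegaForm_apply]; simp [Module.Basis.repr_self, Finsupp.single_apply]
    simp only [hΦdef, map_add, map_smul]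
    simp only [LinearMap.coe_mk, AddHom.coe_mk, hE₁def, hE₂def,
      LinearMap.compl₁₂_apply, LinearMap.fst_apply, LinearMap.snd_apply]
    ext
    · simp [hb01, omegaForm_apply]
    · simp [hc01, omegaForm_apply]
  have e : S ≃ₗ[k] k × k := LinearEquiv.ofBijective Φ ⟨hΦinj, hΦsurj⟩
  rw [e.finrank_eq]
  simp [Module.finrank_prod]
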